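/- Let (Y_α(t))_{t≥0} be a drift-free subordinator without killing whose Lévy measure is ν_α(dt) = e^{−t/α}/(1 − e^{−t/α})^{α+1}·1_{(0,∞)}(t) dt, for 0 < α < 1. Then its Laplace exponent is Φ_α(x) := −log E[e^{−x Y_α(1)}] = Γ(1−α)Γ(αx+1)/Γ(α(x−1)+1) − 1 for x ≥ 0; equivalently, ∫_0^∞ (1 − e^{−xt}) ν_α(dt) = Γ(1−α)Γ(αx+1)/Γ(α(x−1)+1) − 1. -/

import Mathlib

open MeasureTheory Real Set

-- L1
lemma aux_one_sub_exp_ge {u : ℝ} (hu : 0 < u) : min u 1 / 3 ≤ 1 - Real.exp (-u) := by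
  have he1 : Real.exp 1 ≤ 3 := by
    have := Real.exp_one_lt_d9
    linarith
  rcases le_total u 1 with h | h
  · rw [min_eq_left h]
    have h1 : Real.exp (-u) * (1 + u) ≤ 1 := by
      have := Real.add_one_le_exp u
      calc Real.exp (-u) * (1 + u) ≤ Real.exp (-u) * Real.exp u := by
            apply mul_le_mul_of_nonneg_left (by linarith) (Real.exp_pos _).le
        _ = 1 := by rw [← Real.exp_add]; simp
    have h2 : Real.exp (-1 : ℝ) ≤ Real.exp (-u) := Real.exp_le_exp.2 (by linarith)
    have h3 : (1:ℝ)/3 ≤ Real.exp (-1 : ℝ) := by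
      rw [Real.exp_neg]
      rw [div_le_iff₀ (by norm_num)]
      rw [inv_mul_eq_div, le_div_iff₀ (Real.exp_pos _)]
      linarith
    nlinarith [Real.exp_pos (-u), hu]
  · rw [min_eq_right h]
    have h2 : Real.exp (-u) ≤ Real.exp (-1 : ℝ) := Real.exp_le_exp.2 (by linarith)
    have h3 : Real.exp (-1:ℝ) ≤ 1/2 := by
      rw [Real.exp_neg]
      rw [inv_le_comm₀ (Real.exp_pos _) (by norm_num)]
      have := Real.add_one_le_exp 1
      linarith
    linarith

-- L2
lemma aux_rpow_bound {β u : ℝ} (hβ : 0 < β) (hu : 0 < u) :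
    (1 - Real.exp (-u)) ^ (-β) ≤ 3 ^ β * (u ^ (-β) + 1) := by
  have hmin : 0 < min u 1 / 3 := by positivity
  have h1 : (1 - Real.exp (-u)) ^ (-β) ≤ (min u 1 / 3) ^ (-β) :=
    Real.rpow_le_rpow_of_nonpos hmin (aux_one_sub_exp_ge hu) (by linarith)
  refine h1.trans ?_
  rw [Real.div_rpow (le_min hu.le zero_le_one) (by norm_num), Real.rpow_neg (by norm_num : (0:ℝ) ≤ 3)]
  rw [div_eq_mul_inv, inv_inv, mul_comm]
  apply mul_le_mul_of_nonneg_left _ (Real.rpow_nonneg (by norm_num) _)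
  rcases le_total u 1 with h | h
  · rw [min_eq_left h]
    nlinarith [Real.rpow_nonneg hu.le (-β)]
  · rw [min_eq_right h, Real.one_rpow]
    nlinarith [Real.rpow_nonneg hu.le (-β)]

-- L3
lemma aux_integrable_exp_rpow {c r : ℝ} (hc : 0 < c) (hr : -1 < r) :
    IntegrableOn (fun t : ℝ => Real.exp (-(c * t)) * t ^ r) (Ioi (0:ℝ)) := by
  have h0 : IntegrableOn (fun t : ℝ => Real.exp (-t) * t ^ r) (Ioi (0:ℝ)) := by
    have := Real.GammaIntegral_convergent (s := r + 1) (by linarith)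
    simpa using this
  have h1 : IntegrableOn (fun t : ℝ => Real.exp (-(c * t)) * (c * t) ^ r) (Ioi (0:ℝ)) := by
    have := (integrableOn_Ioi_comp_mul_left_iff
      (fun t : ℝ => Real.exp (-t) * t ^ r) 0 hc).2 (by simpa using h0)
    simpa using this
  have h2 : IntegrableOn (fun t : ℝ => c ^ r * (Real.exp (-(c * t)) * t ^ r)) (Ioi (0:ℝ)) := by
    apply (h1.congr_fun ?_ measurableSet_Ioi)
    intro t ht
    show Real.exp (-(c * t)) * (c * t) ^ r = c ^ r * (Real.exp (-(c * t)) * t ^ r)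
    rw [Real.mul_rpow hc.le (le_of_lt ht)]
    ring
  have h3 : IntegrableOn
      (fun t : ℝ => (c ^ r)⁻¹ * (c ^ r * (Real.exp (-(c * t)) * t ^ r))) (Ioi (0:ℝ)) :=
    h2.const_mul _
  refine h3.congr_fun (fun t ht => ?_) measurableSet_Ioi
  show (c ^ r)⁻¹ * (c ^ r * (Real.exp (-(c * t)) * t ^ r)) = Real.exp (-(c * t)) * t ^ r
  rw [← mul_assoc, inv_mul_cancel₀ (Real.rpow_pos_of_pos hc r).ne', one_mul]

lemma aux_beta_real {s b : ℝ} (hs : 0 < s) (hb : 0 < b) :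
    ∫ u in Ioo (0:ℝ) 1, u ^ (s - 1) * (1 - u) ^ (b - 1)
      = Real.Gamma s * Real.Gamma b / Real.Gamma (s + b) := by
  have key : Complex.betaIntegral s b
      = ((∫ u in Ioo (0:ℝ) 1, u ^ (s - 1) * (1 - u) ^ (b - 1) : ℝ) : ℂ) := by
    rw [Complex.betaIntegral, intervalIntegral.integral_of_le zero_le_one,
      ← MeasureTheory.integral_Ioc_eq_integral_Ioo (f := fun u : ℝ =>
        u ^ (s - 1) * (1 - u) ^ (b - 1))]
    have hco : ∀ r : ℝ, Complex.ofReal r = @RCLike.ofReal ℂ _ r := fun r => rfl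
    conv_rhs => rw [hco, ← _root_.integral_ofReal]
    apply setIntegral_congr_fun measurableSet_Ioc
    intro u hu
    have h0 : (0:ℝ) ≤ u := le_of_lt hu.1
    have h1 : (0:ℝ) ≤ 1 - u := by linarith [hu.2]
    dsimp only
    rw [← hco, Complex.ofReal_mul, Complex.ofReal_cpow h0, Complex.ofReal_cpow h1]
    push_cast
    ring
  have h := Complex.Gamma_mul_Gamma_eq_betaIntegral
    (s := (s:ℂ)) (t := (b:ℂ)) (by simpa using hs) (by simpa using hb)
  rw [key] at h
  have h2 : Real.Gamma s * Real.Gamma b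
      = Real.Gamma (s + b) * ∫ u in Ioo (0:ℝ) 1, u ^ (s - 1) * (1 - u) ^ (b - 1) := by
    have := h
    rw [← Complex.ofReal_add, Complex.Gamma_ofReal, Complex.Gamma_ofReal,
      Complex.Gamma_ofReal] at this
    exact_mod_cast this
  have hne : Real.Gamma (s + b) ≠ 0 := (Real.Gamma_pos_of_pos (by linarith)).ne'
  field_simp [h2]
  rw [h2]; ring

lemma aux_subst {α x : ℝ} (hα0 : 0 < α) (hx : 0 < x) :
    ∫ t in Ioi (0:ℝ), Real.exp (-x * t) * (1 - Real.exp (-t / α)) ^ (-α)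
      = α * ∫ u in Ioo (0:ℝ) 1, u ^ (α * x - 1) * (1 - u) ^ (-α) := by
  have himg : (fun t : ℝ => Real.exp (-t / α)) '' Ioi 0 = Ioo 0 1 := by
    ext u
    constructor
    · rintro ⟨t, ht, rfl⟩
      refine ⟨Real.exp_pos _, ?_⟩
      rw [← Real.exp_zero]
      apply Real.exp_lt_exp.2
      have : (0:ℝ) < t := ht
      have : 0 < t / α := div_pos this hα0
      simpa [neg_div] using neg_lt_zero.2 this
    · rintro ⟨hu0, hu1⟩
      refine ⟨-α * Real.log u, ?_, ?_⟩
      · have hlog : Real.log u < 0 := Real.log_neg hu0 hu1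
        have : 0 < -Real.log u := by linarith
        have := mul_pos hα0 this
        simp only [mem_Ioi]
        nlinarith
      · show Real.exp (-(-α * Real.log u) / α) = u
        rw [show -(-α * Real.log u) / α = Real.log u by field_simp]
        exact Real.exp_log hu0
  have hder : ∀ t ∈ Ioi (0:ℝ), HasDerivWithinAt (fun t : ℝ => Real.exp (-t / α))
      (-(Real.exp (-t / α) / α)) (Ioi 0) t := by
    intro t ht
    have h1 : HasDerivAt (fun t : ℝ => -t / α) (-1 / α) t := by
      simpa using ((hasDerivAt_id t).neg.div_const α)
    have := (Real.hasDerivAt_exp (-t / α)).comp t h1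
    exact this.hasDerivWithinAt.congr_deriv (by ring)
  have hinj : InjOn (fun t : ℝ => Real.exp (-t / α)) (Ioi 0) := by
    intro a _ b _ h
    simp only at h
    have h2 : -a / α = -b / α := Real.exp_injective h
    field_simp at h2
    linarith
  have key := integral_image_eq_integral_abs_deriv_smul measurableSet_Ioi hder hinj
    (fun u : ℝ => u ^ (α * x - 1) * (1 - u) ^ (-α))
  rw [himg] at key
  rw [key, ← MeasureTheory.integral_const_mul]
  apply setIntegral_congr_fun measurableSet_Ioi
  intro t ht
  have ht0 : (0:ℝ) < t := ht
  have hexp : (0:ℝ) < Real.exp (-t / α) := Real.exp_pos _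
  show Real.exp (-x * t) * (1 - Real.exp (-t / α)) ^ (-α)
    = α * (|-(Real.exp (-t / α) / α)| • ((Real.exp (-t / α)) ^ (α * x - 1)
        * (1 - Real.exp (-t / α)) ^ (-α)))
  rw [abs_neg, abs_of_pos (div_pos hexp hα0), smul_eq_mul]
  rw [← Real.exp_mul]
  rw [show α * (Real.exp (-t / α) / α * (Real.exp (-t / α * (α * x - 1))
      * (1 - Real.exp (-t / α)) ^ (-α)))
    = (Real.exp (-t / α) * Real.exp (-t / α * (α * x - 1)))
        * (1 - Real.exp (-t / α)) ^ (-α) by field_simp]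
  rw [← Real.exp_add]
  congr 2
  field_simp
  ring

lemma aux_c_pos {α : ℝ} (hα0 : 0 < α) {t : ℝ} (ht : 0 < t) :
    0 < 1 - Real.exp (-t / α) := by
  have h : -t / α < 0 := by
    rw [neg_div]
    exact neg_neg_iff_pos.2 (div_pos ht hα0)
  linarith [Real.exp_lt_one_iff.2 h]

lemma aux_one_sub_exp_le {y : ℝ} : 1 - Real.exp (-y) ≤ y := by
  have := Real.add_one_le_exp (-y)
  linarith

lemma aux_one_sub_exp_nonneg {y : ℝ} (hy : 0 ≤ y) : 0 ≤ 1 - Real.exp (-y) := by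
  have : Real.exp (-y) ≤ Real.exp 0 := Real.exp_le_exp.2 (by linarith)
  simp only [Real.exp_zero] at this
  linarith

-- bound on the rpow of 1 - exp(-t/α) in terms of t
lemma aux_main_bound {α β t : ℝ} (hα0 : 0 < α) (hβ : 0 < β) (ht : 0 < t) :
    (1 - Real.exp (-t / α)) ^ (-β) ≤ 3 ^ β * (α ^ β * t ^ (-β) + 1) := by
  have hu : 0 < t / α := div_pos ht hα0
  have h := aux_rpow_bound hβ hu
  rw [← neg_div] at h
  refine h.trans ?_
  have : (t / α) ^ (-β) = α ^ β * t ^ (-β) := by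
    rw [Real.div_rpow ht.le hα0.le, Real.rpow_neg hα0.le, div_eq_mul_inv, inv_inv, mul_comm]
  rw [this]

lemma aux_k_integrable {α x : ℝ} (hα0 : 0 < α) (hα1 : α < 1) (hx : 0 < x) :
    IntegrableOn (fun t : ℝ => Real.exp (-x * t) * (1 - Real.exp (-t / α)) ^ (-α))
      (Ioi (0:ℝ)) := by
  have hg : IntegrableOn (fun t : ℝ =>
      (3 ^ α * α ^ α) * (Real.exp (-x * t) * t ^ (-α)) + 3 ^ α * Real.exp (-x * t))
      (Ioi (0:ℝ)) := by
    have h1 := (aux_integrable_exp_rpow hx (by linarith : (-1:ℝ) < -α)).const_mul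
      (3 ^ α * α ^ α)
    have h2 := (exp_neg_integrableOn_Ioi 0 hx).const_mul (3 ^ α)
    simp only [neg_mul] at h1 h2 ⊢
    exact h1.add h2
  have hbase : Continuous fun t : ℝ => 1 - Real.exp (-t / α) := by continuity
  refine hg.mono' ?_ ?_
  · exact ((Real.continuous_exp.comp (by continuity)).continuousOn.mul
      (hbase.continuousOn.rpow_const fun t ht => Or.inl (aux_c_pos hα0 ht).ne')).aestronglyMeasurable
      measurableSet_Ioi
  · rw [ae_restrict_iff' measurableSet_Ioi]
    filter_upwards with t ht
    have hc := aux_c_pos hα0 ht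
    have hexp : (0:ℝ) < Real.exp (-x * t) := Real.exp_pos _
    rw [Real.norm_eq_abs, abs_of_nonneg (mul_nonneg hexp.le (Real.rpow_nonneg hc.le _))]
    have hb := aux_main_bound hα0 hα0 ht (β := α)
    calc Real.exp (-x * t) * (1 - Real.exp (-t / α)) ^ (-α)
        ≤ Real.exp (-x * t) * (3 ^ α * (α ^ α * t ^ (-α) + 1)) :=
          mul_le_mul_of_nonneg_left hb hexp.le
      _ = (3 ^ α * α ^ α) * (Real.exp (-x * t) * t ^ (-α)) + 3 ^ α * Real.exp (-x * t) := by
          ring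

lemma aux_F_integrable {α x : ℝ} (hα0 : 0 < α) (hα1 : α < 1) (hx : 0 < x) :
    IntegrableOn (fun t : ℝ => (1 - Real.exp (-x * t)) *
      (Real.exp (-t / α) / (1 - Real.exp (-t / α)) ^ (α + 1))) (Ioi (0:ℝ)) := by
  have hαi : (0:ℝ) < α⁻¹ := inv_pos.2 hα0
  have hg : IntegrableOn (fun t : ℝ =>
      (3 ^ (α+1) * x * α ^ (α+1)) * (Real.exp (-(α⁻¹ * t)) * t ^ (-α))
        + (3 ^ (α+1) * x) * (Real.exp (-(α⁻¹ * t)) * t ^ (1:ℝ))) (Ioi (0:ℝ)) := by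
    exact ((aux_integrable_exp_rpow hαi (by linarith : (-1:ℝ) < -α)).const_mul _).add
      ((aux_integrable_exp_rpow hαi (by norm_num : (-1:ℝ) < 1)).const_mul _)
  have hbase : Continuous fun t : ℝ => 1 - Real.exp (-t / α) := by continuity
  refine hg.mono' ?_ ?_
  · apply ContinuousOn.aestronglyMeasurable _ measurableSet_Ioi
    apply ContinuousOn.mul (by fun_prop)
    apply ContinuousOn.div (by fun_prop)
      (hbase.continuousOn.rpow_const fun t ht => Or.inl (aux_c_pos hα0 ht).ne')
    intro t ht
    exact (Real.rpow_pos_of_pos (aux_c_pos hα0 ht) _).ne'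
  · rw [ae_restrict_iff' measurableSet_Ioi]
    filter_upwards with t ht
    have ht0 : (0:ℝ) < t := ht
    have hc := aux_c_pos hα0 ht0
    have hf1 : (0:ℝ) ≤ 1 - Real.exp (-x * t) := by
      rw [neg_mul]
      exact aux_one_sub_exp_nonneg (by positivity)
    have hf2 : (0:ℝ) < Real.exp (-t / α) / (1 - Real.exp (-t / α)) ^ (α + 1) :=
      div_pos (Real.exp_pos _) (Real.rpow_pos_of_pos hc _)
    rw [Real.norm_eq_abs, abs_of_nonneg (mul_nonneg hf1 hf2.le)]
    have hdiv : Real.exp (-t / α) / (1 - Real.exp (-t / α)) ^ (α + 1)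
        = Real.exp (-(α⁻¹ * t)) * (1 - Real.exp (-t / α)) ^ (-(α+1)) := by
      rw [Real.rpow_neg hc.le, div_eq_mul_inv, neg_div, div_eq_inv_mul]
    have hles : 1 - Real.exp (-x * t) ≤ x * t := by
      rw [neg_mul]; exact aux_one_sub_exp_le
    have hb := aux_main_bound hα0 (by linarith : (0:ℝ) < α + 1) ht0 (β := α + 1)
    have hpow : t * t ^ (-(α+1)) = t ^ (-α) := by
      nth_rewrite 1 [← Real.rpow_one t]
      rw [← Real.rpow_add ht0]
      ring_nf
    rw [hdiv]
    calc (1 - Real.exp (-x * t)) * (Real.exp (-(α⁻¹ * t)) * (1 - Real.exp (-t / α)) ^ (-(α+1)))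
        ≤ (x * t) * (Real.exp (-(α⁻¹ * t)) * (1 - Real.exp (-t / α)) ^ (-(α+1))) := by
          apply mul_le_mul_of_nonneg_right hles
          exact mul_nonneg (Real.exp_pos _).le (Real.rpow_nonneg hc.le _)
      _ ≤ (x * t) * (Real.exp (-(α⁻¹ * t)) * (3 ^ (α+1) * (α ^ (α+1) * t ^ (-(α+1)) + 1))) := by
          apply mul_le_mul_of_nonneg_left _ (by positivity)
          exact mul_le_mul_of_nonneg_left hb (Real.exp_pos _).le
      _ = (3 ^ (α+1) * x * α ^ (α+1)) * (Real.exp (-(α⁻¹ * t)) * (t * t ^ (-(α+1))))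
            + (3 ^ (α+1) * x) * (Real.exp (-(α⁻¹ * t)) * t) := by ring
      _ = (3 ^ (α+1) * x * α ^ (α+1)) * (Real.exp (-(α⁻¹ * t)) * t ^ (-α))
            + (3 ^ (α+1) * x) * (Real.exp (-(α⁻¹ * t)) * t ^ (1:ℝ)) := by
          rw [hpow, Real.rpow_one]

lemma aux_hasDerivAt {α x : ℝ} (hα0 : 0 < α) {t : ℝ} (ht : 0 < t) :
    HasDerivAt (fun t : ℝ => (1 - Real.exp (-x * t)) * (1 - (1 - Real.exp (-t / α)) ^ (-α)))
      (x * Real.exp (-x * t) * (1 - (1 - Real.exp (-t / α)) ^ (-α))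
        + (1 - Real.exp (-x * t)) *
            (Real.exp (-t / α) * (1 - Real.exp (-t / α)) ^ (-α - 1))) t := by
  have hc := aux_c_pos hα0 ht
  have h1 : HasDerivAt (fun y : ℝ => -x * y) (-x) t := by
    simpa using (hasDerivAt_id t).const_mul (-x)
  have hE1 : HasDerivAt (fun y : ℝ => 1 - Real.exp (-x * y)) (x * Real.exp (-x * t)) t := by
    have := ((Real.hasDerivAt_exp (-x * t)).comp t h1).const_sub 1
    exact this.congr_deriv (by ring)
  have h2 : HasDerivAt (fun y : ℝ => -y / α) (-1 / α) t := by
    simpa using ((hasDerivAt_id t).neg.div_const α)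
  have hE2 : HasDerivAt (fun y : ℝ => 1 - Real.exp (-y / α))
      (Real.exp (-t / α) / α) t := by
    have := ((Real.hasDerivAt_exp (-t / α)).comp t h2).const_sub 1
    exact this.congr_deriv (by field_simp)
  have h3 : HasDerivAt (fun y : ℝ => y ^ (-α))
      (-α * (1 - Real.exp (-t / α)) ^ (-α - 1)) (1 - Real.exp (-t / α)) :=
    Real.hasDerivAt_rpow_const (Or.inl hc.ne')
  have hE3 : HasDerivAt (fun y : ℝ => 1 - (1 - Real.exp (-y / α)) ^ (-α))
      (-(-α * (1 - Real.exp (-t / α)) ^ (-α - 1) * (Real.exp (-t / α) / α))) t :=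
    by have := (h3.comp t hE2).const_sub 1; exact this
  have := hE1.mul hE3
  refine this.congr_deriv ?_
  field_simp

lemma aux_G_tendsto_top {α x : ℝ} (hα0 : 0 < α) (hx : 0 < x) :
    Filter.Tendsto
      (fun t : ℝ => (1 - Real.exp (-x * t)) * (1 - (1 - Real.exp (-t / α)) ^ (-α)))
      Filter.atTop (nhds 0) := by
  have l0 : Filter.Tendsto (fun t : ℝ => -x * t) Filter.atTop Filter.atBot := by
    apply Filter.Tendsto.const_mul_atTop_of_neg (by linarith : -x < 0) Filter.tendsto_id
  have l1 : Filter.Tendsto (fun t : ℝ => Real.exp (-x * t)) Filter.atTop (nhds 0) :=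
    Real.tendsto_exp_atBot.comp l0
  have l0' : Filter.Tendsto (fun t : ℝ => -t / α) Filter.atTop Filter.atBot :=
    Filter.Tendsto.atBot_div_const hα0 Filter.tendsto_neg_atTop_atBot
  have l2 : Filter.Tendsto (fun t : ℝ => 1 - Real.exp (-t / α)) Filter.atTop (nhds 1) := by
    have := (Real.tendsto_exp_atBot.comp l0').const_sub 1
    simpa using this
  have l3 : Filter.Tendsto (fun t : ℝ => (1 - Real.exp (-t / α)) ^ (-α))
      Filter.atTop (nhds 1) := by
    have := ((Real.continuousAt_rpow_const 1 (-α) (Or.inl one_ne_zero)).tendsto).comp l2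
    simpa [Function.comp_def] using this
  have := ((l1.const_sub 1).mul (l3.const_sub 1))
  simpa using this

lemma aux_G_tendsto_zero {α x : ℝ} (hα0 : 0 < α) (hα1 : α < 1) (hx : 0 < x) :
    Filter.Tendsto
      (fun t : ℝ => (1 - Real.exp (-x * t)) * (1 - (1 - Real.exp (-t / α)) ^ (-α)))
      (nhdsWithin 0 (Ici 0)) (nhds 0) := by
  set B : ℝ → ℝ := fun t => (1 + 3 ^ α) * (x * t) + (3 ^ α * α ^ α * x) * t ^ (1 - α) with hB
  have hBt : Filter.Tendsto B (nhds 0) (nhds 0) := by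
    have hcont : ContinuousAt B 0 := by
      apply ContinuousAt.add (by fun_prop)
      exact continuous_const.continuousAt.mul
        (Real.continuousAt_rpow_const 0 (1 - α) (Or.inr (by linarith)))
    have hB0 : B 0 = 0 := by
      simp [hB, Real.zero_rpow (by linarith : (1:ℝ) - α ≠ 0)]
    simpa [hB0] using hcont.tendsto
  apply squeeze_zero_norm' _ (hBt.mono_left nhdsWithin_le_nhds)
  filter_upwards [self_mem_nhdsWithin] with t ht
  rcases eq_or_lt_of_le (mem_Ici.1 ht) with h | h
  · rw [← h]
    simp [hB, Real.zero_rpow (by linarith : (1:ℝ) - α ≠ 0)]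
  · have ht0 : (0:ℝ) < t := h
    have hc := aux_c_pos hα0 ht0
    have hcr : (0:ℝ) ≤ (1 - Real.exp (-t / α)) ^ (-α) := Real.rpow_nonneg hc.le _
    have h1 : (0:ℝ) ≤ 1 - Real.exp (-x * t) := by
      rw [neg_mul]; exact aux_one_sub_exp_nonneg (by positivity)
    have h2 : 1 - Real.exp (-x * t) ≤ x * t := by
      rw [neg_mul]; exact aux_one_sub_exp_le
    have h3 : |1 - (1 - Real.exp (-t / α)) ^ (-α)| ≤ 1 + (1 - Real.exp (-t / α)) ^ (-α) :=
      abs_le.2 ⟨by linarith, by linarith⟩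
    have hb := aux_main_bound hα0 hα0 ht0 (β := α)
    have hpow : t * t ^ (-α) = t ^ (1 - α) := by
      nth_rewrite 1 [← Real.rpow_one t]
      rw [← Real.rpow_add ht0]
      ring_nf
    rw [norm_mul, Real.norm_eq_abs, Real.norm_eq_abs, abs_of_nonneg h1]
    calc (1 - Real.exp (-x * t)) * |1 - (1 - Real.exp (-t / α)) ^ (-α)|
        ≤ (x * t) * (1 + (1 - Real.exp (-t / α)) ^ (-α)) := by
          apply mul_le_mul h2 h3 (abs_nonneg _) (by positivity)
      _ ≤ (x * t) * (1 + 3 ^ α * (α ^ α * t ^ (-α) + 1)) := by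
          apply mul_le_mul_of_nonneg_left _ (by positivity)
          linarith
      _ = (1 + 3 ^ α) * (x * t) + (3 ^ α * α ^ α * x) * (t * t ^ (-α)) := by ring
      _ = B t := by rw [hpow]

/-- **Laplace exponent of the subordinator `Y_α`.**
For `0 < α < 1` and `x ≥ 0`,
`∫_0^∞ (1 − e^{−xt}) e^{−t/α}(1 − e^{−t/α})^{−(α+1)} dt
  = Γ(1−α)Γ(αx+1)/Γ(α(x−1)+1) − 1`. -/
theorem laplace_exponent_Y_alpha
    (α : ℝ) (hα0 : 0 < α) (hα1 : α < 1) (x : ℝ) (hx : 0 ≤ x) :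
    ∫ t in Set.Ioi (0:ℝ),
        (1 - Real.exp (-x * t)) *
          (Real.exp (-t / α) / (1 - Real.exp (-t / α)) ^ (α + 1))
      = Real.Gamma (1 - α) * Real.Gamma (α * x + 1) / Real.Gamma (α * (x - 1) + 1) - 1 := by
  rcases hx.eq_or_lt with h | hx0
  · -- x = 0
    have h1 : α * ((0:ℝ) - 1) + 1 = 1 - α := by ring
    rw [← h]
    simp only [neg_zero, zero_mul, Real.exp_zero, sub_self, zero_mul, integral_zero,
      mul_zero, zero_add, h1, Real.Gamma_one, mul_one]
    rw [div_self (Real.Gamma_pos_of_pos (by linarith : (0:ℝ) < 1 - α)).ne', sub_self]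
  · have hs : 0 < α * x := mul_pos hα0 hx0
    have hkint := aux_k_integrable hα0 hα1 hx0
    have hFint := aux_F_integrable hα0 hα1 hx0
    have heint : IntegrableOn (fun t : ℝ => Real.exp (-x * t)) (Ioi (0:ℝ)) :=
      exp_neg_integrableOn_Ioi 0 hx0
    -- pointwise identity
    have hpt : ∀ t ∈ Ioi (0:ℝ),
        x * Real.exp (-x * t) * (1 - (1 - Real.exp (-t / α)) ^ (-α))
          + (1 - Real.exp (-x * t)) *
              (Real.exp (-t / α) * (1 - Real.exp (-t / α)) ^ (-α - 1))
        = (1 - Real.exp (-x * t)) *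
            (Real.exp (-t / α) / (1 - Real.exp (-t / α)) ^ (α + 1))
          + x * Real.exp (-x * t)
          - x * (Real.exp (-x * t) * (1 - Real.exp (-t / α)) ^ (-α)) := by
      intro t ht
      have hc := aux_c_pos hα0 (by exact ht)
      have e1 : Real.exp (-t / α) / (1 - Real.exp (-t / α)) ^ (α + 1)
          = Real.exp (-t / α) * (1 - Real.exp (-t / α)) ^ (-α - 1) := by
        rw [show -α - 1 = -(α + 1) by ring, Real.rpow_neg hc.le, div_eq_mul_inv]
      rw [e1]
      ring
    have hG'int : IntegrableOn (fun t : ℝ =>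
        x * Real.exp (-x * t) * (1 - (1 - Real.exp (-t / α)) ^ (-α))
          + (1 - Real.exp (-x * t)) *
              (Real.exp (-t / α) * (1 - Real.exp (-t / α)) ^ (-α - 1))) (Ioi (0:ℝ)) := by
      have base : IntegrableOn (fun t : ℝ =>
          (1 - Real.exp (-x * t)) *
              (Real.exp (-t / α) / (1 - Real.exp (-t / α)) ^ (α + 1))
            + x * Real.exp (-x * t)
            - x * (Real.exp (-x * t) * (1 - Real.exp (-t / α)) ^ (-α))) (Ioi (0:ℝ)) :=
        (hFint.add (heint.const_mul x)).sub (hkint.const_mul x)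
      apply base.congr_fun (fun t ht => (hpt t ht).symm) measurableSet_Ioi
    -- FTC on (0, ∞)
    have hG0 : (fun t : ℝ => (1 - Real.exp (-x * t))
        * (1 - (1 - Real.exp (-t / α)) ^ (-α))) 0 = 0 := by
      simp
    have hcw : ContinuousWithinAt (fun t : ℝ => (1 - Real.exp (-x * t))
        * (1 - (1 - Real.exp (-t / α)) ^ (-α))) (Ici 0) 0 := by
      unfold ContinuousWithinAt
      rw [hG0]
      exact aux_G_tendsto_zero hα0 hα1 hx0
    have hFTC := integral_Ioi_of_hasDerivAt_of_tendsto hcw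
      (fun t ht => aux_hasDerivAt hα0 (by exact ht)) hG'int (aux_G_tendsto_top hα0 hx0)
    rw [show (1 - Real.exp (-x * 0)) * (1 - (1 - Real.exp (-(0:ℝ) / α)) ^ (-α)) = 0 by simp,
      sub_zero] at hFTC
    -- split the integral of G'
    have hsplit : ∫ t in Ioi (0:ℝ),
        (x * Real.exp (-x * t) * (1 - (1 - Real.exp (-t / α)) ^ (-α))
          + (1 - Real.exp (-x * t)) *
              (Real.exp (-t / α) * (1 - Real.exp (-t / α)) ^ (-α - 1)))
        = (∫ t in Ioi (0:ℝ), (1 - Real.exp (-x * t)) *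
            (Real.exp (-t / α) / (1 - Real.exp (-t / α)) ^ (α + 1)))
          + x * (∫ t in Ioi (0:ℝ), Real.exp (-x * t))
          - x * ∫ t in Ioi (0:ℝ),
              Real.exp (-x * t) * (1 - Real.exp (-t / α)) ^ (-α) := by
      rw [setIntegral_congr_fun measurableSet_Ioi hpt]
      have hxe : IntegrableOn (fun t : ℝ => x * Real.exp (-x * t)) (Ioi (0:ℝ)) :=
        heint.const_mul x
      have hxk : IntegrableOn (fun t : ℝ =>
          x * (Real.exp (-x * t) * (1 - Real.exp (-t / α)) ^ (-α))) (Ioi (0:ℝ)) :=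
        hkint.const_mul x
      have hFe : IntegrableOn (fun t : ℝ =>
          (1 - Real.exp (-x * t)) *
              (Real.exp (-t / α) / (1 - Real.exp (-t / α)) ^ (α + 1))
            + x * Real.exp (-x * t)) (Ioi (0:ℝ)) := hFint.add hxe
      rw [integral_sub hFe hxk, integral_add hFint hxe, MeasureTheory.integral_const_mul,
        MeasureTheory.integral_const_mul]
    -- value of the exponential integral
    have hexp_int : ∫ t in Ioi (0:ℝ), Real.exp (-x * t) = x⁻¹ := by
      have h0 := integral_comp_mul_left_Ioi (fun u : ℝ => Real.exp (-u)) 0 hx0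
      rw [mul_zero] at h0
      rw [show (fun t : ℝ => Real.exp (-x * t)) = fun t : ℝ => Real.exp (-(x * t)) by
        funext t; rw [neg_mul]]
      rw [h0, integral_exp_neg_Ioi_zero, smul_eq_mul, mul_one]
    -- value of the Beta-type integral
    have hkval : ∫ t in Ioi (0:ℝ), Real.exp (-x * t) * (1 - Real.exp (-t / α)) ^ (-α)
        = α * (Real.Gamma (α * x) * Real.Gamma (1 - α) / Real.Gamma (α * x + (1 - α))) := by
      rw [aux_subst hα0 hx0]
      congr 1
      have hbeta := aux_beta_real (s := α * x) (b := 1 - α) hs (by linarith)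
      rw [show (1:ℝ) - α - 1 = -α by ring] at hbeta
      rw [hbeta]
    -- assemble
    rw [hFTC, hexp_int, hkval] at hsplit
    have hxx : x * x⁻¹ = 1 := mul_inv_cancel₀ hx0.ne'
    rw [hxx] at hsplit
    have hmain : ∫ t in Ioi (0:ℝ), (1 - Real.exp (-x * t)) *
          (Real.exp (-t / α) / (1 - Real.exp (-t / α)) ^ (α + 1))
        = x * (α * (Real.Gamma (α * x) * Real.Gamma (1 - α)
            / Real.Gamma (α * x + (1 - α)))) - 1 := by
      linarith [hsplit]
    rw [hmain, Real.Gamma_add_one hs.ne',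
      show α * (x - 1) + 1 = α * x + (1 - α) by ring]
    ring
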